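/- In ℝ with the usual topology, let g : ℝ × ℝ → ℝ be defined by g(x,y) = x² − y², let A = {0,1,2,3,5}, B = {−1,−2,−3,4}, and let f : A → B be defined by f(0) = f(3) = f(5) = 4, f(1) = −1, f(2) = −2. Then D_g(A,B) = 0 and f is topologically proximal Berinde non-expansive with respect to g with N = 1; however, with d the usual metric on ℝ and D(A,B) = inf{d(x,y) : x ∈ A, y ∈ B} = 1, f is not proximal Berinde non-expansive with respect to d with N = 1, i.e., there exist x₁, x₂, u₁, u₂ ∈ A with d(u₁, f(x₁)) = D(A,B) and d(u₂, f(x₂)) = D(A,B) but d(u₁, u₂) > d(x₁, x₂) + d(x₂, u₁). -/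

import Mathlib

open Filter Topology

/-- `D_g(A,B) = inf {|g x y| : x ∈ A, y ∈ B}`. -/
noncomputable def Dg {X : Type*} (g : X → X → ℝ) (A B : Set X) : ℝ :=
  sInf {r : ℝ | ∃ x ∈ A, ∃ y ∈ B, r = |g x y|}

/-- `D(A,B) = inf {d(x,y) : x ∈ A, y ∈ B}` for the usual metric on `ℝ`. -/
noncomputable def Dd (A B : Set ℝ) : ℝ :=
  sInf {r : ℝ | ∃ x ∈ A, ∃ y ∈ B, r = dist x y}

/-- `g(x,y) = x² - y²`. -/
noncomputable def g17 : ℝ → ℝ → ℝ := fun x y => x ^ 2 - y ^ 2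

/-- `A = {0,1,2,3,5}`. -/
def A17 : Set ℝ := {0, 1, 2, 3, 5}

/-- `B = {-1,-2,-3,4}`. -/
def B17 : Set ℝ := {-1, -2, -3, 4}

lemma dg17 : Dg g17 A17 B17 = 0 := by
  unfold Dg
  apply le_antisymm
  · apply csInf_le
    · exact ⟨0, by rintro r ⟨x, hx, y, hy, rfl⟩; positivity⟩
    · exact ⟨1, by simp [A17], -1, by simp [B17], by norm_num [g17]⟩
  · apply le_csInf
    · exact ⟨1, 0, by simp [A17], -1, by simp [B17], by norm_num [g17]⟩
    · rintro r ⟨x, hx, y, hy, rfl⟩; positivity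

lemma key17 (f : ℝ → ℝ)
    (hf0 : f 0 = 4) (hf3 : f 3 = 4) (hf5 : f 5 = 4)
    (hf1 : f 1 = -1) (hf2 : f 2 = -2) :
    ∀ x ∈ A17, ∀ u ∈ A17, |g17 u (f x)| = 0 → u = x := by
  intro x hx u hu h
  simp only [A17, Set.mem_insert_iff, Set.mem_singleton_iff] at hx hu
  rcases hx with rfl | rfl | rfl | rfl | rfl <;>
    [rw [hf0] at h; rw [hf1] at h; rw [hf2] at h; rw [hf3] at h; rw [hf5] at h] <;>
    rcases hu with rfl | rfl | rfl | rfl | rfl <;>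
    (revert h; norm_num [g17])

lemma dd17 : Dd A17 B17 = 1 := by
  unfold Dd
  apply le_antisymm
  · apply csInf_le
    · exact ⟨0, by rintro r ⟨x, hx, y, hy, rfl⟩; positivity⟩
    · exact ⟨0, by simp [A17], -1, by simp [B17], by norm_num [Real.dist_eq]⟩
  · apply le_csInf
    · exact ⟨1, 0, by simp [A17], -1, by simp [B17], by norm_num [Real.dist_eq]⟩
    · rintro r ⟨x, hx, y, hy, rfl⟩
      simp only [A17, B17, Set.mem_insert_iff, Set.mem_singleton_iff] at hx hy
      rcases hx with rfl | rfl | rfl | rfl | rfl <;>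
        rcases hy with rfl | rfl | rfl | rfl <;>
        norm_num [Real.dist_eq, abs_sub_le_iff] <;> norm_num [abs_le]

theorem stmt_17 (f : ℝ → ℝ)
    (hf0 : f 0 = 4) (hf3 : f 3 = 4) (hf5 : f 5 = 4)
    (hf1 : f 1 = -1) (hf2 : f 2 = -2) :
    Dg g17 A17 B17 = 0 ∧
    (∀ x₁ ∈ A17, ∀ x₂ ∈ A17, ∀ u₁ ∈ A17, ∀ u₂ ∈ A17,
      |g17 u₁ (f x₁)| = Dg g17 A17 B17 → |g17 u₂ (f x₂)| = Dg g17 A17 B17 →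
      |g17 u₁ u₂| ≤ |g17 x₁ x₂| + 1 * |g17 x₂ u₁|) ∧
    Dd A17 B17 = 1 ∧
    (∃ x₁ ∈ A17, ∃ x₂ ∈ A17, ∃ u₁ ∈ A17, ∃ u₂ ∈ A17,
      dist u₁ (f x₁) = Dd A17 B17 ∧ dist u₂ (f x₂) = Dd A17 B17 ∧
      dist u₁ u₂ > dist x₁ x₂ + 1 * dist x₂ u₁) := by
  refine ⟨dg17, ?_, dd17, ?_⟩
  · intro x₁ hx₁ x₂ hx₂ u₁ hu₁ u₂ hu₂ h1 h2
    rw [dg17] at h1 h2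
    obtain rfl := key17 f hf0 hf3 hf5 hf1 hf2 x₁ hx₁ u₁ hu₁ h1
    obtain rfl := key17 f hf0 hf3 hf5 hf1 hf2 x₂ hx₂ u₂ hu₂ h2
    have := abs_nonneg (g17 u₂ u₁)
    linarith
  · refine ⟨1, by simp [A17], 0, by simp [A17], 0, by simp [A17], 5, by simp [A17],
      ?_, ?_, ?_⟩ <;> try rw [dd17]
    all_goals norm_num [hf0, hf1, Real.dist_eq]
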